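/- Let Γ be a countable discrete group that is weakly amenable with Cowling–Haagerup constant Λ(Γ) = 1 (i.e. weakly amenable with constant at most C for every C > 1). Then there exist a function ψ : Γ → [0, ∞), a complex Hilbert space H, and maps R, S : Γ → H such that ψ(y⁻¹x) = ‖R(x) − R(y)‖² + ‖S(x) + S(y)‖² for all x, y ∈ Γ, and ψ is proper: for every M > 0 the set {x ∈ Γ : ψ(x) ≤ M} is finite. -/

import Mathlib

open scoped InnerProductSpace ENNReal ComplexConjugate

noncomputable section

/-- A discrete group `Γ` is weakly amenable with constant at most `C` if for every finite
subset `F` and every `ε > 0` there is a finitely supported `φ : Γ → ℂ` with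
`|φ s − 1| ≤ ε` on `F`, which is a Herz–Schur multiplier of norm at most `C`, i.e.
`φ (s⁻¹ t) = ⟪ξ t, η s⟫` for bounded Hilbert-space-valued maps `ξ, η` whose sup-norms
have product at most `C`. -/
def WeaklyAmenableWithConst (Γ : Type*) [Group Γ] (C : ℝ) : Prop :=
  ∀ (F : Finset Γ) (ε : ℝ), 0 < ε →
    ∃ φ : Γ → ℂ, (Function.support φ).Finite ∧ (∀ s ∈ F, ‖φ s - 1‖ ≤ ε) ∧
      ∃ (H : Type) (_ : NormedAddCommGroup H) (_ : InnerProductSpace ℂ H)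
        (_ : CompleteSpace H) (ξ η : Γ → H) (A B : ℝ),
        0 ≤ A ∧ 0 ≤ B ∧ (∀ t, ‖ξ t‖ ≤ A) ∧ (∀ s, ‖η s‖ ≤ B) ∧ A * B ≤ C ∧
        ∀ s t : Γ, φ (s⁻¹ * t) = ⟪ξ t, η s⟫_ℂ

lemma miniKey {E : Type*} [NormedAddCommGroup E] [InnerProductSpace ℂ E] (a b c d : E) :
    ‖(2⁻¹:ℂ) • (a + b) - (2⁻¹:ℂ) • (c + d)‖ ^ 2 + ‖(2⁻¹:ℂ) • (a - b) + (2⁻¹:ℂ) • (c - d)‖ ^ 2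
      = (‖a‖ ^ 2 + ‖b‖ ^ 2 + ‖c‖ ^ 2 + ‖d‖ ^ 2) / 2 - ((⟪a, d⟫_ℂ).re + (⟪b, c⟫_ℂ).re) := by
  have hn : ∀ z : E, ‖z‖ ^ 2 = (⟪z, z⟫_ℂ).re := fun z => (inner_self_eq_norm_sq (𝕜 := ℂ) z).symm
  rw [hn, hn, hn, hn, hn, hn]
  simp only [inner_sub_left, inner_sub_right, inner_add_left, inner_add_right,
    inner_smul_left, inner_smul_right, map_inv₀, Complex.conj_ofNat]
  have hsymm : ∀ x y : E, (⟪x, y⟫_ℂ).re = (⟪y, x⟫_ℂ).re := fun x y => inner_re_symm (𝕜 := ℂ) x y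
  simp only [Complex.add_re, Complex.sub_re, Complex.mul_re, Complex.inv_re, Complex.inv_im]
  norm_num
  rw [hsymm d a, hsymm c a, hsymm c b, hsymm d b]
  ring

lemma scale_lemma {Γ : Type*} [Group Γ] (F : Finset Γ) (h1 : (1:Γ) ∈ F)
    (hsymm : ∀ g ∈ F, g⁻¹ ∈ F) (δ : ℝ) (hδ : 0 < δ) (hδ1 : δ ≤ 1/8)
    (hw : WeaklyAmenableWithConst Γ (1 + δ)) :
    ∃ (ψ : Γ → ℝ) (K : Type) (_ : NormedAddCommGroup K) (_ : InnerProductSpace ℂ K)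
      (_ : CompleteSpace K) (R S : Γ → K),
      (∀ g, 0 ≤ ψ g) ∧
      (∀ x y : Γ, ψ (y⁻¹ * x) = ‖R x - R y‖ ^ 2 + ‖S x + S y‖ ^ 2) ∧
      (∀ g ∈ F, ψ g ≤ 8 * δ) ∧
      (∃ T : Finset Γ, ∀ g ∉ T, 2 ≤ ψ g) := by
  obtain ⟨φ, hφfin, hφF, H, i1, i2, i3, ξ, η, A, B, hA0, hB0, hξ, hη, hAB, hrep⟩ :=
    hw F δ hδ
  classical
  -- basic bounds
  have hφb : ∀ g : Γ, ‖φ g‖ ≤ A * B := by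
    intro g
    have := hrep 1 g
    rw [inv_one, one_mul] at this
    rw [this]
    exact (norm_inner_le_norm _ _).trans (mul_le_mul (hξ g) (hη 1) (norm_nonneg _) hA0)
  have hφ1 : (1:ℝ) - δ ≤ ‖φ 1‖ := by
    have h := hφF 1 h1
    have := norm_sub_norm_le (1:ℂ) (φ 1)
    rw [norm_sub_rev] at this
    simp only [norm_one] at this
    linarith
  have hlow : (1:ℝ) - δ ≤ A * B := hφ1.trans (hφb 1)
  have hABpos : 0 < A * B := lt_of_lt_of_le (by linarith) hlow
  have hApos : 0 < A := by
    rcases hA0.lt_or_eq with h | h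
    · exact h
    · exfalso; rw [← h, zero_mul] at hABpos; exact lt_irrefl 0 hABpos
  have hBpos : 0 < B := by
    rcases hB0.lt_or_eq with h | h
    · exact h
    · exfalso; rw [← h, mul_zero] at hABpos; exact lt_irrefl 0 hABpos
  -- rescaled maps
  set c : ℝ := Real.sqrt (B / A) with hc
  set d : ℝ := Real.sqrt (A / B) with hd
  have hc0 : 0 ≤ c := Real.sqrt_nonneg _
  have hd0 : 0 ≤ d := Real.sqrt_nonneg _
  have hcd : c * d = 1 := by
    rw [hc, hd, ← Real.sqrt_mul (by positivity)]
    rw [show B / A * (A / B) = 1 by field_simp]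
    exact Real.sqrt_one
  have hc2 : c ^ 2 = B / A := Real.sq_sqrt (by positivity)
  have hd2 : d ^ 2 = A / B := Real.sq_sqrt (by positivity)
  set a : Γ → H := fun t => (c:ℂ) • ξ t with hadef
  set b : Γ → H := fun t => (d:ℂ) • η t with hbdef
  have ha2 : ∀ t, ‖a t‖ ^ 2 ≤ A * B := by
    intro t
    have : ‖a t‖ = c * ‖ξ t‖ := by
      rw [hadef]; simp [norm_smul, Complex.norm_real, abs_of_nonneg hc0]
    rw [this, mul_pow, hc2]
    calc B / A * ‖ξ t‖ ^ 2 ≤ B / A * A ^ 2 := by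
          apply mul_le_mul_of_nonneg_left _ (by positivity)
          exact pow_le_pow_left₀ (norm_nonneg _) (hξ t) 2
      _ = A * B := by field_simp
  have hb2 : ∀ t, ‖b t‖ ^ 2 ≤ A * B := by
    intro t
    have : ‖b t‖ = d * ‖η t‖ := by
      rw [hbdef]; simp [norm_smul, Complex.norm_real, abs_of_nonneg hd0]
    rw [this, mul_pow, hd2]
    calc A / B * ‖η t‖ ^ 2 ≤ A / B * B ^ 2 := by
          apply mul_le_mul_of_nonneg_left _ (by positivity)
          exact pow_le_pow_left₀ (norm_nonneg _) (hη t) 2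
      _ = A * B := by field_simp
  have hcdC : (c:ℂ) * (d:ℂ) = 1 := by
    rw [← Complex.ofReal_mul, hcd, Complex.ofReal_one]
  have hab : ∀ s t : Γ, ⟪a t, b s⟫_ℂ = φ (s⁻¹ * t) := by
    intro s t
    rw [hadef, hbdef]
    simp only [inner_smul_left, inner_smul_right, Complex.conj_ofReal]
    rw [← hrep s t]; ring_nf; rw [mul_comm (d:ℂ) (c:ℂ), hcdC]; ring
  have hba : ∀ s t : Γ, ⟪b t, a s⟫_ℂ = conj (φ (t⁻¹ * s)) := by
    intro s t
    rw [hadef, hbdef]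
    simp only [inner_smul_left, inner_smul_right, Complex.conj_ofReal]
    rw [← inner_conj_symm, ← hrep t s]
    rw [← mul_assoc, hcdC, one_mul]
  -- the padded vectors
  set pad : Γ → ℝ := fun t => Real.sqrt (2*(A*B) - ‖a t‖^2 - ‖b t‖^2) with hpad
  have hpadsq : ∀ t, pad t ^ 2 = 2*(A*B) - ‖a t‖^2 - ‖b t‖^2 := by
    intro t
    exact Real.sq_sqrt (by have := ha2 t; have := hb2 t; linarith)
  set u : Γ → WithLp 2 ((WithLp 2 (H × H)) × (WithLp 2 (ℂ × ℂ))) :=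
    fun t => WithLp.toLp 2 (WithLp.toLp 2 (a t, b t), WithLp.toLp 2 ((pad t : ℂ), (0:ℂ))) with hu
  set v : Γ → WithLp 2 ((WithLp 2 (H × H)) × (WithLp 2 (ℂ × ℂ))) :=
    fun t => WithLp.toLp 2 (WithLp.toLp 2 (b t, a t), WithLp.toLp 2 ((0:ℂ), (pad t : ℂ))) with hv
  have hnC : ∀ r : ℝ, ‖(r : ℂ)‖^2 = r^2 := by
    intro r; rw [Complex.norm_real]; exact sq_abs r
  have hu2 : ∀ t, ‖u t‖ ^ 2 = 2*(A*B) := by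
    intro t
    rw [hu]
    simp only [WithLp.prod_norm_sq_eq_of_L2, WithLp.toLp_fst, WithLp.toLp_snd]
    rw [hnC]
    simp only [norm_zero]
    rw [hpadsq t]; ring
  have hv2 : ∀ t, ‖v t‖ ^ 2 = 2*(A*B) := by
    intro t
    rw [hv]
    simp only [WithLp.prod_norm_sq_eq_of_L2, WithLp.toLp_fst, WithLp.toLp_snd]
    rw [hnC]
    simp only [norm_zero]
    rw [hpadsq t]; ring
  have huv : ∀ s t : Γ, ⟪u t, v s⟫_ℂ = φ (s⁻¹ * t) + conj (φ (t⁻¹ * s)) := by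
    intro s t
    rw [hu, hv]
    simp only [WithLp.prod_inner_apply]
    rw [hab s t, hba s t]
    simp [inner]
  -- the maps
  set R : Γ → WithLp 2 ((WithLp 2 (H × H)) × (WithLp 2 (ℂ × ℂ))) :=
    fun x => (2⁻¹:ℂ) • (u x + v x) with hR
  set S : Γ → WithLp 2 ((WithLp 2 (H × H)) × (WithLp 2 (ℂ × ℂ))) :=
    fun x => (2⁻¹:ℂ) • (u x - v x) with hS
  set ψ : Γ → ℝ := fun g => 4*(A*B) - 2*(φ g).re - 2*(φ g⁻¹).re with hψ
  have key : ∀ x y : Γ, ψ (y⁻¹ * x) = ‖R x - R y‖ ^ 2 + ‖S x + S y‖ ^ 2 := by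
    intro x y
    rw [hR, hS]
    simp only []
    rw [miniKey (u x) (v x) (u y) (v y)]
    rw [hu2, hv2, hu2, hv2, huv y x]
    have h2 : ∀ p q : WithLp 2 ((WithLp 2 (H × H)) × (WithLp 2 (ℂ × ℂ))),
        (⟪p, q⟫_ℂ).re = (⟪q, p⟫_ℂ).re := fun p q => inner_re_symm (𝕜 := ℂ) p q
    rw [h2, huv x y]
    have hinv : (y⁻¹ * x)⁻¹ = x⁻¹ * y := by group
    rw [hψ]
    simp only [hinv, Complex.add_re, Complex.conj_re]
    ring
  have hnonneg : ∀ g : Γ, 0 ≤ ψ g := by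
    intro g
    have := key g 1
    rw [inv_one, one_mul] at this
    rw [this]
    positivity
  refine ⟨ψ, WithLp 2 ((WithLp 2 (H × H)) × (WithLp 2 (ℂ × ℂ))), inferInstance, inferInstance, inferInstance, R, S, hnonneg, key, ?_, ?_⟩
  · intro g hg
    have hg' := hsymm g hg
    have hre : ∀ s : Γ, s ∈ F → 1 - δ ≤ (φ s).re := by
      intro s hs
      have h := hφF s hs
      have : |(φ s - 1).re| ≤ ‖φ s - 1‖ := Complex.abs_re_le_norm _
      rw [Complex.sub_re, Complex.one_re] at this
      have := abs_le.mp (this.trans h)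
      linarith [this.1]
    have h1 := hre g hg
    have h2 := hre g⁻¹ hg'
    rw [hψ]
    simp only []
    linarith
  · refine ⟨hφfin.toFinset ∪ hφfin.toFinset.image (·⁻¹), ?_⟩
    intro g hg
    simp only [Finset.mem_union, Finset.mem_image, Set.Finite.mem_toFinset,
      Function.mem_support, not_or, not_exists, not_and] at hg
    have hg1 : φ g = 0 := by
      by_contra hne; exact hg.1 hne
    have hg2 : φ g⁻¹ = 0 := by
      by_contra hne
      exact hg.2 g⁻¹ hne (inv_inv g)
    rw [hψ, ]
    simp only [hg1, hg2, Complex.zero_re]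
    linarith

end

-- helper lemmas for lp with p = 2
lemma memℓp_two_of_sq {ι : Type*} {E : ι → Type*} [∀ i, NormedAddCommGroup (E i)] {f : ∀ i, E i}
    (h : Summable (fun i => ‖f i‖ ^ (2:ℕ))) : Memℓp f 2 := by
  apply memℓp_gen
  have h2 : (2:ℝ≥0∞).toReal = ((2:ℕ):ℝ) := by norm_num
  rw [h2]
  simpa only [Real.rpow_natCast] using h

lemma lp_norm_sq {ι : Type*} {E : ι → Type*} [∀ i, NormedAddCommGroup (E i)] (f : lp E 2) :
    ‖f‖ ^ (2:ℕ) = ∑' i, ‖f i‖ ^ (2:ℕ) := by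
  have := lp.norm_rpow_eq_tsum (p := 2) (by norm_num) f
  have h2 : (2:ℝ≥0∞).toReal = ((2:ℕ):ℝ) := by norm_num
  rw [h2] at this
  simpa only [Real.rpow_natCast] using this

noncomputable section


/-- **Knudby.** If a countable discrete group has Cowling–Haagerup constant `1`, then it
admits a proper nonnegative function `ψ` of the form
`ψ (y⁻¹ x) = ‖R x − R y‖² + ‖S x + S y‖²` for Hilbert-space-valued maps `R, S`. -/
theorem knudby_weak_haagerup {Γ : Type*} [Group Γ] [Countable Γ]
    (h : ∀ C : ℝ, 1 < C → WeaklyAmenableWithConst Γ C) :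
    ∃ (ψ : Γ → ℝ) (H : Type) (_ : NormedAddCommGroup H) (_ : InnerProductSpace ℂ H)
      (_ : CompleteSpace H) (R S : Γ → H),
      (∀ x, 0 ≤ ψ x) ∧
      (∀ x y : Γ, ψ (y⁻¹ * x) = ‖R x - R y‖ ^ 2 + ‖S x + S y‖ ^ 2) ∧
      (∀ M : ℝ, 0 < M → {x : Γ | ψ x ≤ M}.Finite) := by
  classical
  obtain ⟨e, he⟩ := exists_surjective_nat Γ
  -- the exhausting symmetric finite sets
  set F : ℕ → Finset Γ := fun n =>
    ((Finset.range (n+1)).image e ∪ (Finset.range (n+1)).image (fun i => (e i)⁻¹)) ∪ {1}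
    with hF
  have h1F : ∀ n, (1:Γ) ∈ F n := by
    intro n; simp [hF]
  have hsymF : ∀ n, ∀ g ∈ F n, g⁻¹ ∈ F n := by
    intro n g hg
    simp only [hF, Finset.mem_union, Finset.mem_image, Finset.mem_singleton] at hg ⊢
    rcases hg with (⟨i, hi, rfl⟩ | ⟨i, hi, rfl⟩) | rfl
    · exact Or.inl (Or.inr ⟨i, hi, rfl⟩)
    · exact Or.inl (Or.inl ⟨i, hi, by simp⟩)
    · simp
  have hcover : ∀ g : Γ, ∃ m : ℕ, ∀ n, m ≤ n → g ∈ F n := by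
    intro g
    obtain ⟨m, rfl⟩ := he g
    refine ⟨m, fun n hn => ?_⟩
    simp only [hF, Finset.mem_union, Finset.mem_image]
    exact Or.inl (Or.inl ⟨m, Finset.mem_range.mpr (by omega), rfl⟩)
  -- the scales
  set δ : ℕ → ℝ := fun n => (1/2)^n * (1/16) with hδdef
  have hδpos : ∀ n, 0 < δ n := by intro n; positivity
  have hδ18 : ∀ n, δ n ≤ 1/8 := by
    intro n
    have : (1/2:ℝ)^n ≤ 1 := pow_le_one₀ (by norm_num) (by norm_num)
    rw [hδdef]; nlinarith
  have hδ8 : ∀ n, 8 * δ n ≤ (1/2)^n := by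
    intro n
    have : (0:ℝ) < (1/2)^n := by positivity
    rw [hδdef]; nlinarith
  have pkg : ∀ n : ℕ,
      ∃ (ψ : Γ → ℝ) (K : Type) (_ : NormedAddCommGroup K) (_ : InnerProductSpace ℂ K)
        (_ : CompleteSpace K) (R S : Γ → K),
        (∀ g, 0 ≤ ψ g) ∧
        (∀ x y : Γ, ψ (y⁻¹ * x) = ‖R x - R y‖ ^ 2 + ‖S x + S y‖ ^ 2) ∧
        (∀ g ∈ F n, ψ g ≤ 8 * δ n) ∧
        (∃ T : Finset Γ, ∀ g ∉ T, 2 ≤ ψ g) := by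
    intro n
    exact scale_lemma (F n) (h1F n) (hsymF n) (δ n) (hδpos n) (hδ18 n)
      (h (1 + δ n) (by linarith [hδpos n]))
  choose ψ K i1 i2 i3 R S hpos hiden hsmall hT using pkg
  choose T hT using hT
  letI : ∀ n, NormedAddCommGroup (K n) := i1
  letI : ∀ n, InnerProductSpace ℂ (K n) := i2
  letI : ∀ n, CompleteSpace (K n) := i3
  -- summability of the ψ's
  have hsummable : ∀ g : Γ, Summable (fun n => ψ n g) := by
    intro g
    obtain ⟨m, hm⟩ := hcover g
    rw [← summable_nat_add_iff m]
    refine Summable.of_nonneg_of_le (fun n => hpos _ _) (fun n => ?_)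
      (((summable_geometric_of_lt_one (r := (1/2:ℝ)) (by norm_num) (by norm_num)).mul_right
        ((1/2:ℝ)^m)))
    calc ψ (n + m) g ≤ 8 * δ (n + m) := hsmall _ _ (hm _ (by omega))
      _ ≤ (1/2)^(n+m) := hδ8 _
      _ = (1/2)^n * (1/2)^m := pow_add _ _ _
  set Ψ : Γ → ℝ := fun g => ∑' n, ψ n g with hΨ
  -- the sq-norm bounds
  have hRbound : ∀ x : Γ, ∀ n, ‖R n x - R n 1‖ ^ 2 ≤ ψ n x := by
    intro x n
    have := hiden n x 1
    rw [inv_one, one_mul] at this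
    nlinarith [sq_nonneg (‖S n x + S n 1‖), this]
  have hSsq : ∀ x : Γ, ∀ n, ‖S n x‖ ^ 2 = ψ n 1 / 4 := by
    intro x n
    have := hiden n x x
    rw [inv_mul_cancel] at this
    rw [sub_self, norm_zero] at this
    have h2 : S n x + S n x = (2:ℝ) • S n x := (two_smul ℝ _).symm
    rw [h2, norm_smul] at this
    simp at this
    nlinarith [this]
  have hmemR : ∀ x : Γ, Memℓp (fun n => R n x - R n 1) 2 := by
    intro x
    apply memℓp_two_of_sq
    exact Summable.of_nonneg_of_le (fun n => sq_nonneg _) (fun n => hRbound x n) (hsummable x)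
  have hmemS : ∀ x : Γ, Memℓp (fun n => S n x) 2 := by
    intro x
    apply memℓp_two_of_sq
    have : Summable (fun n => ψ n 1 / 4) := (hsummable 1).div_const 4
    exact this.congr (fun n => (hSsq x n).symm)
  set Rmap : Γ → lp K 2 := fun x => ⟨fun n => R n x - R n 1, hmemR x⟩ with hRmap
  set Smap : Γ → lp K 2 := fun x => ⟨fun n => S n x, hmemS x⟩ with hSmap
  refine ⟨Ψ, lp K 2, inferInstance, inferInstance, inferInstance, Rmap, Smap, ?_, ?_, ?_⟩
  · intro g
    exact tsum_nonneg (fun n => hpos n g)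
  · intro x y
    have hsumg := hsummable (y⁻¹ * x)
    have sRR : Summable fun n => ‖R n x - R n y‖ ^ (2:ℕ) := by
      apply Summable.of_nonneg_of_le (fun n => sq_nonneg _) _ hsumg
      intro n
      have := hiden n x y
      nlinarith [sq_nonneg (‖S n x + S n y‖), this]
    have sSS : Summable fun n => ‖S n x + S n y‖ ^ (2:ℕ) := by
      apply Summable.of_nonneg_of_le (fun n => sq_nonneg _) _ hsumg
      intro n
      have := hiden n x y
      nlinarith [sq_nonneg (‖R n x - R n y‖), this]
    have hRcoe : ∀ n, (Rmap x - Rmap y) n = R n x - R n y := by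
      intro n
      rw [lp.coeFn_sub]
      simp only [Pi.sub_apply, hRmap]
      show (R n x - R n 1) - (R n y - R n 1) = R n x - R n y
      abel
    have hScoe : ∀ n, (Smap x + Smap y) n = S n x + S n y := by
      intro n
      rw [lp.coeFn_add]
      simp only [Pi.add_apply, hSmap]
    have e1 : ‖Rmap x - Rmap y‖ ^ 2 = ∑' n, ‖R n x - R n y‖ ^ 2 := by
      rw [lp_norm_sq (Rmap x - Rmap y)]
      exact tsum_congr (fun n => by rw [hRcoe n])
    have e2 : ‖Smap x + Smap y‖ ^ 2 = ∑' n, ‖S n x + S n y‖ ^ 2 := by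
      rw [lp_norm_sq (Smap x + Smap y)]
      exact tsum_congr (fun n => by rw [hScoe n])
    calc Ψ (y⁻¹ * x) = ∑' n, (‖R n x - R n y‖ ^ 2 + ‖S n x + S n y‖ ^ 2) :=
          tsum_congr (fun n => hiden n x y)
      _ = (∑' n, ‖R n x - R n y‖ ^ 2) + ∑' n, ‖S n x + S n y‖ ^ 2 := Summable.tsum_add sRR sSS
      _ = ‖Rmap x - Rmap y‖ ^ 2 + ‖Smap x + Smap y‖ ^ 2 := by rw [e1, e2]
  · intro M hM
    obtain ⟨m, hm⟩ := exists_nat_gt (M / 2)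
    apply Set.Finite.subset (Set.Finite.biUnion (Set.finite_Iio (m+1))
      (fun i _ => (T i).finite_toSet))
    intro g hg
    simp only [Set.mem_setOf_eq] at hg
    by_contra hgo
    have hno : ∀ i, i < m + 1 → g ∉ T i := by
      intro i hi hgT
      exact hgo (Set.mem_biUnion hi hgT)
    have hbig : ∀ i ∈ Finset.range (m+1), (2:ℝ) ≤ ψ i g := by
      intro i hi
      exact hT i g (hno i (Finset.mem_range.mp hi))
    have : (2:ℝ) * (m+1) ≤ Ψ g := by
      calc (2:ℝ) * (m+1) = ∑ _i ∈ Finset.range (m+1), (2:ℝ) := by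
            simp [mul_comm]
        _ ≤ ∑ i ∈ Finset.range (m+1), ψ i g := Finset.sum_le_sum hbig
        _ ≤ Ψ g := Summable.sum_le_tsum _ (fun i _ => hpos i g) (hsummable g)
    have : M < Ψ g := by
      have : M < 2 * (m+1) := by
        have := (div_lt_iff₀ (by norm_num : (0:ℝ) < 2)).mp hm
        push_cast
        nlinarith
      linarith
    linarith
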